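/- (Corollary 1) If Y is an everywhere dense subspace of a compact Hausdorff space X, then the set {μ ∈ I(X) : supp μ ⊆ Y} of idempotent probability measures on X whose support is contained in Y is everywhere dense in I(X). -/

import Mathlib

set_option maxHeartbeats 1000000


/-- `μ : C(X, ℝ) → ℝ` is an idempotent probability measure. -/
def IsIPM {X : Type*} [TopologicalSpace X] (μ : C(X, ℝ) → ℝ) : Prop :=
  (∀ c : ℝ, μ (ContinuousMap.const X c) = c) ∧
  (∀ (φ : C(X, ℝ)) (c : ℝ), μ (φ + ContinuousMap.const X c) = μ φ + c) ∧
  (∀ φ ψ : C(X, ℝ), μ (φ ⊔ ψ) = max (μ φ) (μ ψ))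

/-- `μ` is supported on the set `F`. -/
def IPMSupportedOn {X : Type*} [TopologicalSpace X] (μ : C(X, ℝ) → ℝ) (F : Set X) : Prop :=
  ∀ φ ψ : C(X, ℝ), (∀ x ∈ F, φ x = ψ x) → μ φ = μ ψ

/-- The support of `μ`. -/
def IPMsupport {X : Type*} [TopologicalSpace X] (μ : C(X, ℝ) → ℝ) : Set X :=
  ⋂₀ {F : Set X | IsClosed F ∧ IPMSupportedOn μ F}

/-- The pushforward `I(f)`. -/
def IPMmap {X Y : Type*} [TopologicalSpace X] [TopologicalSpace Y]
    (f : C(X, Y)) (μ : C(X, ℝ) → ℝ) : C(Y, ℝ) → ℝ :=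
  fun ψ => μ (ψ.comp f)

/-- The max-plus combination `α⊙μ₁ ⊕ β⊙μ₂`. -/
def mpComb {X : Type*} [TopologicalSpace X] (α β : ℝ) (μ₁ μ₂ : C(X, ℝ) → ℝ) :
    C(X, ℝ) → ℝ :=
  fun φ => max (α + μ₁ φ) (β + μ₂ φ)

/-- The Dirac measure `δ_x`. -/
def IPMdirac {X : Type*} [TopologicalSpace X] (x : X) : C(X, ℝ) → ℝ := fun φ => φ x

/-- `μ` is a finitely supported idempotent probability measure of the form
`λ₁⊙δ_{x₁} ⊕ … ⊕ λ_s⊙δ_{x_s}` with all the points `xᵢ` in `Y`. -/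
def IsFinSuppIPM {X : Type*} [TopologicalSpace X] (Y : Set X) (μ : C(X, ℝ) → ℝ) : Prop :=
  ∃ (n : ℕ) (x : Fin (n + 1) → X) (lam : Fin (n + 1) → ℝ),
    (∀ i, x i ∈ Y) ∧
    Finset.univ.sup' Finset.univ_nonempty lam = 0 ∧
    μ = fun φ => Finset.univ.sup' Finset.univ_nonempty fun i => lam i + φ (x i)

/-- `I_β(X)`: idempotent probability measures on `βX` with support in (the image of) `X`. -/
def IBeta (X : Type*) [TopologicalSpace X] : Set (C(StoneCech X, ℝ) → ℝ) :=
  {μ | IsIPM μ ∧ IPMsupport μ ⊆ Set.range (stoneCechUnit : X → StoneCech X)}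

lemma ipm_mono {X : Type*} [TopologicalSpace X] {μ : C(X, ℝ) → ℝ} (h : IsIPM μ)
    {φ ψ : C(X, ℝ)} (hle : φ ≤ ψ) : μ φ ≤ μ ψ := by
  have h1 : φ ⊔ ψ = ψ := sup_eq_right.mpr hle
  have h2 := h.2.2 φ ψ
  rw [h1] at h2
  rw [h2]
  exact le_max_left _ _

lemma ipm_sup' {X : Type*} [TopologicalSpace X] {μ : C(X, ℝ) → ℝ} (h : IsIPM μ)
    {ι : Type*} (s : Finset ι) (H : s.Nonempty) (f : ι → C(X, ℝ)) :
    μ (s.sup' H f) = s.sup' H (fun i => μ (f i)) :=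
  Finset.comp_sup'_eq_sup'_comp H μ (fun x y => h.2.2 x y)

lemma real_sup'_add {ι : Type*} (s : Finset ι) (H : s.Nonempty) (f : ι → ℝ) (k : ℝ) :
    s.sup' H (fun i => f i + k) = s.sup' H f + k :=
  (Finset.comp_sup'_eq_sup'_comp H (fun x : ℝ => x + k)
    (fun x y => (max_add_add_right x y k).symm)).symm

lemma ipm_key {X : Type*} [TopologicalSpace X] [CompactSpace X] [T2Space X] [Nonempty X]
    {Y : Set X} (hY : Dense Y) {μ : C(X, ℝ) → ℝ} (hμ : IsIPM μ) (Φ : Finset C(X, ℝ))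
    {ε : ℝ} (hε : 0 < ε) :
    ∃ ν : C(X, ℝ) → ℝ, IsIPM ν ∧ IPMsupport ν ⊆ Y ∧ ∀ φ ∈ Φ, |ν φ - μ φ| < ε := by
  obtain ⟨h1, h2, h3⟩ := id hμ
  set δ := ε / 2 with hδdef
  have hδ : 0 < δ := by positivity
  set B := ∑ φ ∈ Φ, ‖φ‖ with hBdef
  have hB0 : 0 ≤ B := Finset.sum_nonneg fun _ _ => norm_nonneg _
  have hB : ∀ φ ∈ Φ, ∀ x : X, |φ x| ≤ B := by
    intro φ hφ x
    calc |φ x| ≤ ‖φ‖ := by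
          have := φ.norm_coe_le_norm x
          simpa [Real.norm_eq_abs] using this
      _ ≤ B := Finset.single_le_sum (f := fun ψ : C(X, ℝ) => ‖ψ‖)
          (fun i _ => norm_nonneg i) hφ
  set N := 2 * B + 1 with hNdef
  have hN0 : 0 ≤ N := by rw [hNdef]; linarith
  set U : X → Set X := fun x => {z | ∀ φ ∈ Φ, |φ z - φ x| < δ / 2} with hUdef
  have hUspec : ∀ x z, z ∈ U x → ∀ φ ∈ Φ, |φ z - φ x| < δ / 2 := fun x z hz => hz
  have hUopen : ∀ x, IsOpen (U x) := by
    intro x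
    have hrw : U x = ⋂ φ ∈ Φ, {z | |φ z - φ x| < δ / 2} := by
      ext z; simp [hUdef]
    rw [hrw]
    exact isOpen_biInter_finset fun φ _ =>
      isOpen_lt (((map_continuous φ).sub continuous_const).abs) continuous_const
  have hUmem : ∀ x, x ∈ U x := by
    intro x φ hφ
    simpa [sub_self] using half_pos hδ
  obtain ⟨T, hT⟩ := isCompact_univ.elim_finite_subcover U hUopen
    (fun x _ => Set.mem_iUnion.2 ⟨x, hUmem x⟩)
  obtain ⟨x0⟩ := ‹Nonempty X›
  have hx0 := hT (Set.mem_univ x0)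
  rw [Set.mem_iUnion₂] at hx0
  obtain ⟨a0, ha0T, _⟩ := hx0
  haveI : Nonempty {a : X // a ∈ T} := ⟨⟨a0, ha0T⟩⟩
  set ι := {a : X // a ∈ T} with hιdef
  have hcov : (Set.univ : Set X) ⊆ ⋃ i : ι, U i.1 := by
    intro x hx
    have hx' := hT hx
    rw [Set.mem_iUnion₂] at hx'
    obtain ⟨a, haT, hxa⟩ := hx'
    exact Set.mem_iUnion.2 ⟨⟨a, haT⟩, hxa⟩
  obtain ⟨v, hvcov, hvopen, hvcl⟩ :=
    exists_subset_iUnion_closure_subset isClosed_univ (fun i : ι => hUopen i.1)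
      (fun x _ => Set.toFinite _) hcov
  have hUry : ∀ i : ι, ∃ f : C(X, ℝ), Set.EqOn f 0 (closure (v i)) ∧
      Set.EqOn f 1 (U i.1)ᶜ ∧ ∀ x, f x ∈ Set.Icc (0:ℝ) 1 :=
    fun i => exists_continuous_zero_one_of_isClosed isClosed_closure
      (hUopen i.1).isClosed_compl (disjoint_compl_right.mono_left (hvcl i))
  choose f hf0 hf1 hf01 using hUry
  set g : ι → C(X, ℝ) := fun i => (-N) • f i with hgdef
  have hgval : ∀ i x, g i x = -N * f i x := by
    intro i x; simp [hgdef]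
  have hgle : ∀ i, ∀ x, g i x ≤ 0 := by
    intro i x
    rw [hgval]
    exact mul_nonpos_of_nonpos_of_nonneg (by linarith) (hf01 i x).1
  have hg0 : ∀ i, ∀ x ∈ closure (v i), g i x = 0 := by
    intro i x hx
    rw [hgval]
    have : f i x = 0 := hf0 i hx
    rw [this, mul_zero]
  have hgN : ∀ i, ∀ x ∉ U i.1, g i x = -N := by
    intro i x hx
    rw [hgval]
    have : f i x = 1 := hf1 i hx
    rw [this, mul_one]
  have hyex : ∀ i : ι, ∃ z, z ∈ Y ∧ z ∈ U i.1 := by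
    intro i
    obtain ⟨z, hzU, hzY⟩ := hY.inter_open_nonempty (U i.1) (hUopen i.1) ⟨i.1, hUmem i.1⟩
    exact ⟨z, hzY, hzU⟩
  choose y hyY hyU using hyex
  set c : ι → ℝ := fun i => μ (g i) with hcdef
  set ν : C(X, ℝ) → ℝ := fun φ => Finset.univ.sup' Finset.univ_nonempty
    (fun i : ι => c i + φ (y i)) with hνdef
  -- sup of g's is zero
  have hsupg : Finset.univ.sup' Finset.univ_nonempty g = (0 : C(X, ℝ)) := by
    ext x
    rw [ContinuousMap.sup'_apply]
    obtain ⟨i, hi⟩ := Set.mem_iUnion.mp (hvcov (Set.mem_univ x))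
    simp only [ContinuousMap.zero_apply]
    apply le_antisymm
    · exact Finset.sup'_le _ _ fun j _ => hgle j x
    · exact Finset.le_sup'_of_le _ (Finset.mem_univ i) (hg0 i x (subset_closure hi)).ge
  have hμ0 : μ (0 : C(X, ℝ)) = 0 := by
    have hz : (ContinuousMap.const X (0:ℝ)) = 0 := by ext x; simp
    rw [← hz]; exact h1 0
  have hsupc : Finset.univ.sup' Finset.univ_nonempty c = 0 := by
    have hs := ipm_sup' hμ Finset.univ Finset.univ_nonempty g
    rw [hsupg, hμ0] at hs
    exact hs.symm
  -- ν is an IPM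
  have hνipm : IsIPM ν := by
    refine ⟨?_, ?_, ?_⟩
    · intro k
      show Finset.univ.sup' Finset.univ_nonempty (fun i : ι => c i + _) = k
      simp only [ContinuousMap.const_apply]
      rw [real_sup'_add, hsupc, zero_add]
    · intro φ k
      show Finset.univ.sup' Finset.univ_nonempty (fun i : ι => c i + (φ + _) (y i)) = _
      simp only [ContinuousMap.add_apply, ContinuousMap.const_apply]
      have hre : (fun i : ι => c i + (φ (y i) + k)) = fun i : ι => (c i + φ (y i)) + k := by
        funext i; ring
      rw [hre, real_sup'_add]
    · intro φ ψ
      show Finset.univ.sup' Finset.univ_nonempty (fun i : ι => c i + (φ ⊔ ψ) (y i)) =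
        max (Finset.univ.sup' Finset.univ_nonempty (fun i : ι => c i + φ (y i)))
          (Finset.univ.sup' Finset.univ_nonempty (fun i : ι => c i + ψ (y i)))
      apply le_antisymm
      · apply Finset.sup'_le
        intro i _
        rw [ContinuousMap.sup_apply]
        have : c i + (φ (y i) ⊔ ψ (y i)) = max (c i + φ (y i)) (c i + ψ (y i)) :=
          (max_add_add_left _ _ _).symm
        rw [this]
        exact max_le_max
          (Finset.le_sup' (fun i : ι => c i + φ (y i)) (Finset.mem_univ i))
          (Finset.le_sup' (fun i : ι => c i + ψ (y i)) (Finset.mem_univ i))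
      · refine max_le ?_ ?_ <;>
        · apply Finset.sup'_le
          intro i _
          refine Finset.le_sup'_of_le _ (Finset.mem_univ i) ?_
          rw [ContinuousMap.sup_apply]
          have := le_max_left (φ (y i)) (ψ (y i))
          have := le_max_right (φ (y i)) (ψ (y i))
          first
          | exact add_le_add (le_refl _) (le_max_left _ _)
          | exact add_le_add (le_refl _) (le_max_right _ _)
  -- support of ν
  have hνsupp : IPMsupport ν ⊆ Y := by
    have hmem : Set.range y ∈ {F : Set X | IsClosed F ∧ IPMSupportedOn ν F} := by
      refine ⟨(Set.finite_range y).isClosed, ?_⟩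
      intro φ ψ hφψ
      show Finset.univ.sup' _ _ = Finset.univ.sup' _ _
      congr 1
      funext i
      rw [hφψ (y i) ⟨i, rfl⟩]
    exact (Set.sInter_subset_of_mem hmem).trans (by rintro _ ⟨i, rfl⟩; exact hyY i)
  -- upper bound
  have hub : ∀ φ ∈ Φ, ν φ ≤ μ φ + δ := by
    intro φ hφ
    apply Finset.sup'_le
    intro i _
    have hle : g i + ContinuousMap.const X (φ (y i)) ≤ φ + ContinuousMap.const X δ := by
      rw [ContinuousMap.le_def]
      intro x
      simp only [ContinuousMap.add_apply, ContinuousMap.const_apply]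
      by_cases hx : x ∈ U i.1
      · obtain ⟨o1l, o1r⟩ := abs_lt.mp (hUspec i.1 (y i) (hyU i) φ hφ)
        obtain ⟨o2l, o2r⟩ := abs_lt.mp (hUspec i.1 x hx φ hφ)
        have := hgle i x
        linarith
      · rw [hgN i x hx]
        obtain ⟨b1l, b1r⟩ := abs_le.mp (hB φ hφ (y i))
        obtain ⟨b2l, b2r⟩ := abs_le.mp (hB φ hφ x)
        rw [hNdef]
        linarith
    calc c i + φ (y i) = μ (g i + ContinuousMap.const X (φ (y i))) := (h2 _ _).symm
      _ ≤ μ (φ + ContinuousMap.const X δ) := ipm_mono hμ hle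
      _ = μ φ + δ := h2 _ _
  -- lower bound
  have hlb : ∀ φ ∈ Φ, μ φ ≤ ν φ + δ := by
    intro φ hφ
    set h : C(X, ℝ) := Finset.univ.sup' Finset.univ_nonempty
      (fun i : ι => g i + ContinuousMap.const X (φ (y i))) with hhdef
    have hφle : φ ≤ h + ContinuousMap.const X δ := by
      rw [ContinuousMap.le_def]
      intro x
      obtain ⟨i, hi⟩ := Set.mem_iUnion.mp (hvcov (Set.mem_univ x))
      have hg0x : g i x = 0 := hg0 i x (subset_closure hi)
      have hxU : x ∈ U i.1 := hvcl i (subset_closure hi)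
      obtain ⟨o1l, o1r⟩ := abs_lt.mp (hUspec i.1 x hxU φ hφ)
      obtain ⟨o2l, o2r⟩ := abs_lt.mp (hUspec i.1 (y i) (hyU i) φ hφ)
      have hhx : g i x + φ (y i) ≤ h x := by
        rw [hhdef, ContinuousMap.sup'_apply]
        exact Finset.le_sup'_of_le _ (Finset.mem_univ i) (by simp)
      simp only [ContinuousMap.add_apply, ContinuousMap.const_apply]
      rw [hg0x] at hhx
      linarith
    have hmono := ipm_mono hμ hφle
    rw [h2] at hmono
    have hμh : μ h = ν φ := by
      rw [hhdef, ipm_sup' hμ]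
      congr 1
      funext i
      rw [h2]
    linarith
  refine ⟨ν, hνipm, hνsupp, ?_⟩
  intro φ hφ
  have hu := hub φ hφ
  have hl := hlb φ hφ
  rw [abs_sub_lt_iff]
  constructor <;> [linarith; linarith]


/-- Corollary 1: if `Y` is dense in a compact Hausdorff space `X`, then the
measures with support contained in `Y` are dense in `I(X)`. -/
theorem ipm_support_subset_dense {X : Type*} [TopologicalSpace X] [CompactSpace X]
    [T2Space X] (Y : Set X) (hY : Dense Y) :
    {μ : C(X, ℝ) → ℝ | IsIPM μ} ⊆
      closure {μ : C(X, ℝ) → ℝ | IsIPM μ ∧ IPMsupport μ ⊆ Y} := by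
  classical
  intro μ hμ
  by_cases hX : Nonempty X
  case neg =>
    exfalso
    have hz : (ContinuousMap.const X (0:ℝ)) = ContinuousMap.const X 1 := by
      ext x; exact absurd ⟨x⟩ hX
    have h0 := hμ.1 0
    rw [hz, hμ.1 1] at h0
    norm_num at h0
  haveI := hX
  rw [mem_closure_iff_nhds]
  intro W hW
  rw [nhds_pi, Filter.mem_pi] at hW
  obtain ⟨I, hIfin, t, ht, htW⟩ := hW
  have hεex : ∀ φ : C(X, ℝ), ∃ e : ℝ, 0 < e ∧ (φ ∈ I → Metric.ball (μ φ) e ⊆ t φ) := by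
    intro φ
    by_cases hφ : φ ∈ I
    · obtain ⟨e, he, hball⟩ := Metric.mem_nhds_iff.mp (ht φ)
      exact ⟨e, he, fun _ => hball⟩
    · exact ⟨1, one_pos, fun h => absurd h hφ⟩
  choose e he hball using hεex
  set Φ : Finset C(X, ℝ) := insert 0 hIfin.toFinset with hΦdef
  have hΦne : Φ.Nonempty := ⟨0, Finset.mem_insert_self _ _⟩
  set ε := Φ.inf' hΦne e with hεdef
  have hε0 : 0 < ε := by
    rw [hεdef]
    exact (Finset.lt_inf'_iff _).mpr fun φ _ => he φ
  obtain ⟨ν, hνipm, hνsupp, hclose⟩ := ipm_key hY hμ Φ hε0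
  refine ⟨ν, ?_, hνipm, hνsupp⟩
  apply htW
  rw [Set.mem_pi]
  intro φ hφ
  have hφΦ : φ ∈ Φ := Finset.mem_insert_of_mem (hIfin.mem_toFinset.mpr hφ)
  apply hball φ hφ
  rw [Metric.mem_ball, Real.dist_eq]
  calc |ν φ - μ φ| < ε := hclose φ hφΦ
    _ ≤ e φ := Finset.inf'_le _ hφΦ
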